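/- Let θ > 0, suppose Σ_i |u_i| > 0 and max_i |D_{i,i}| > 0, and define σ(θ) = θ^{−1} · ln(Σ_i |u_i|) and ρ(θ) = θ^{−1} · ln(max_i |D_{i,i}|). Then for every natural number m, |a · Γ^m · b| ≤ exp(θ·σ(θ) + θ·ρ(θ)·m); in particular, if a · Γ^m · b is a positive real number and m ≥ 1, then (1/(θ m)) · ln(a · Γ^m · b) ≤ σ(θ)/m + ρ(θ). -/

import Mathlib

open scoped Matrix

lemma stmt12_aux (n : ℕ) (Γ U D : Matrix (Fin n) (Fin n) ℂ)
    (hU : IsUnit U) (hD : D.IsDiag) (hΓ : Γ = U * D * U⁻¹)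
    (a b : Fin n → ℂ) (m : ℕ) :
    (a ᵥ* Γ ^ m) ⬝ᵥ b = ∑ i, (a ᵥ* U) i * (U⁻¹ *ᵥ b) i * (D i i) ^ m := by
  have hdet : IsUnit U.det := (Matrix.isUnit_iff_isUnit_det U).mp hU
  have h1 : U⁻¹ * U = 1 := Matrix.nonsing_inv_mul U hdet
  have h2 : U * U⁻¹ = 1 := Matrix.mul_nonsing_inv U hdet
  have hd : D = Matrix.diagonal (Matrix.diag D) := hD.diagonal_diag.symm
  have hpow : Γ ^ m = U * Matrix.diagonal (fun i => (D i i) ^ m) * U⁻¹ := by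
    induction m with
    | zero => simp [h2]
    | succ k ih =>
      have hconj : ∀ X Y : Matrix (Fin n) (Fin n) ℂ, U * X * U⁻¹ * (U * Y * U⁻¹)
          = U * (X * Y) * U⁻¹ := by
        intro X Y
        simp only [Matrix.mul_assoc]
        rw [← Matrix.mul_assoc U⁻¹ U, h1, Matrix.one_mul]
      rw [pow_succ, ih, hΓ, hconj]
      congr 1
      conv_lhs => rw [hd]
      rw [Matrix.diagonal_mul_diagonal]
      congr 1
      ext i
      simp [pow_succ, Matrix.diag]
  rw [hpow, ← Matrix.vecMul_vecMul, ← Matrix.vecMul_vecMul, ← Matrix.dotProduct_mulVec]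
  simp [dotProduct, Matrix.vecMul_diagonal, mul_assoc, mul_comm, mul_left_comm]

/-- Let `Γ` be an `n×n` complex matrix that is diagonalizable:
`Γ = U · D · U^{−1}` for an invertible `n×n` complex matrix `U` and a diagonal matrix
`D`. For a row vector `a ∈ ℂ^n` and a column vector `b ∈ ℂ^n`, write
`u_i = (aU)_i · (U^{−1}b)_i`. Let `θ > 0`, suppose `Σ_i |u_i| > 0` and
`max_i |D_{i,i}| > 0`, and define `σ(θ) = θ^{−1} · ln(Σ_i |u_i|)` and
`ρ(θ) = θ^{−1} · ln(max_i |D_{i,i}|)`. Then for every natural number `m`,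
`|a · Γ^m · b| ≤ exp(θ·σ(θ) + θ·ρ(θ)·m)`; in particular, if `a · Γ^m · b` is a positive
real number and `m ≥ 1`, then `(1/(θ m)) · ln(a · Γ^m · b) ≤ σ(θ)/m + ρ(θ)`. -/
theorem stmt12 (n : ℕ) (hn : 0 < n) (Γ U D : Matrix (Fin n) (Fin n) ℂ)
    (hU : IsUnit U) (hD : D.IsDiag) (hΓ : Γ = U * D * U⁻¹)
    (a b : Fin n → ℂ) (u : Fin n → ℂ)
    (hu : ∀ i, u i = (a ᵥ* U) i * (U⁻¹ *ᵥ b) i)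
    (θ : ℝ) (hθ : 0 < θ)
    (hsum : 0 < ∑ i, ‖u i‖)
    (hmax : 0 < Finset.univ.sup' ⟨⟨0, hn⟩, Finset.mem_univ _⟩
      (fun i => ‖D i i‖))
    (σ ρ : ℝ)
    (hσ : σ = θ⁻¹ * Real.log (∑ i, ‖u i‖))
    (hρ : ρ = θ⁻¹ * Real.log (Finset.univ.sup' ⟨⟨0, hn⟩, Finset.mem_univ _⟩
      (fun i => ‖D i i‖))) :
    (∀ m : ℕ, ‖(a ᵥ* Γ ^ m) ⬝ᵥ b‖ ≤ Real.exp (θ * σ + θ * ρ * m)) ∧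
      (∀ m : ℕ, 1 ≤ m → ∀ r : ℝ, 0 < r → (a ᵥ* Γ ^ m) ⬝ᵥ b = (r : ℂ) →
        1 / (θ * m) * Real.log r ≤ σ / m + ρ) := by
  set S : ℝ := ∑ i, ‖u i‖ with hS
  set M : ℝ := Finset.univ.sup' ⟨⟨0, hn⟩, Finset.mem_univ _⟩
      (fun i => ‖D i i‖) with hM
  have hθσ : θ * σ = Real.log S := by rw [hσ]; field_simp
  have hθρ : θ * ρ = Real.log M := by rw [hρ]; field_simp
  have key : ∀ m : ℕ, ‖(a ᵥ* Γ ^ m) ⬝ᵥ b‖ ≤ Real.exp (θ * σ + θ * ρ * m) := by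
    intro m
    rw [stmt12_aux n Γ U D hU hD hΓ a b m]
    calc ‖∑ i, (a ᵥ* U) i * (U⁻¹ *ᵥ b) i * (D i i) ^ m‖
        ≤ ∑ i, ‖(a ᵥ* U) i * (U⁻¹ *ᵥ b) i * (D i i) ^ m‖ := by
          exact norm_sum_le _ _
      _ = ∑ i, ‖u i‖ * ‖D i i‖ ^ m := by
          refine Finset.sum_congr rfl fun i _ => ?_
          rw [norm_mul, norm_pow, hu i, norm_mul]
      _ ≤ ∑ i, ‖u i‖ * M ^ m := by
          refine Finset.sum_le_sum fun i _ => ?_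
          refine mul_le_mul_of_nonneg_left ?_ (norm_nonneg _)
          exact pow_le_pow_left₀ (norm_nonneg _)
            (Finset.le_sup' (fun i => ‖D i i‖) (Finset.mem_univ i)) m
      _ = S * M ^ m := by rw [← Finset.sum_mul]
      _ = Real.exp (θ * σ + θ * ρ * m) := by
          rw [Real.exp_add, hθσ, hθρ, Real.exp_log hsum, mul_comm (Real.log M) (m : ℝ),
            Real.exp_nat_mul, Real.exp_log hmax]
  refine ⟨key, fun m hm r hr heq => ?_⟩
  have hmpos : (0 : ℝ) < m := by exact_mod_cast hm
  have h1 : r ≤ Real.exp (θ * σ + θ * ρ * m) := by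
    have := key m
    rwa [heq, Complex.norm_real, Real.norm_eq_abs, abs_of_pos hr] at this
  have h2 : Real.log r ≤ θ * σ + θ * ρ * m :=
    (Real.log_le_iff_le_exp hr).mpr h1
  have hθm : (0 : ℝ) < θ * m := mul_pos hθ hmpos
  rw [div_add' _ _ _ (ne_of_gt hmpos)] at *
  calc 1 / (θ * m) * Real.log r ≤ 1 / (θ * m) * (θ * σ + θ * ρ * m) := by
        exact mul_le_mul_of_nonneg_left h2 (by positivity)
    _ = (σ + ρ * m) / m := by field_simp
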